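/- Let X be a separable infinite-dimensional complex Banach space, let S be a bounded linear operator on X that is a generalised backward 1-shift adapted to a linearly independent sequence (x_k)_{k≥1} with dense linear span, and let λ ∈ ℂ with |λ| = 1. Then λI + S is mixing. -/

import Mathlib

/-- A bounded operator `T` on `X` is mixing: for every pair of nonempty open sets
`U, V` there is `N` such that `T^n(U) ∩ V ≠ ∅` for all `n > N`. -/
def IsMixingOp {X : Type*} [NormedAddCommGroup X] [NormedSpace ℂ X]
    (T : X →L[ℂ] X) : Prop :=
  ∀ U V : Set X, IsOpen U → IsOpen V → U.Nonempty → V.Nonempty →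
    ∃ N : ℕ, ∀ n : ℕ, N < n → ((fun v => (T ^ n) v) '' U ∩ V).Nonempty

/-- `S` is a generalised backward 1-shift adapted to the sequence `x` (indexed from 0,
so `x 0` plays the role of `x₁`): `S x₀ = 0`, and for `k ≥ 1`, `S xₖ` is a linear
combination of `x₀, …, x_{k-1}` in which the coefficient of `x_{k-1}` is nonzero. -/
def IsGenBackwardOneShift {X : Type*} [NormedAddCommGroup X] [NormedSpace ℂ X]
    (S : X →L[ℂ] X) (x : ℕ → X) : Prop :=
  S (x 0) = 0 ∧
    ∀ k : ℕ, 1 ≤ k → ∃ c : ℕ → ℂ,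
      S (x k) = ∑ i ∈ Finset.range k, c i • x i ∧ c (k - 1) ≠ 0

open Finset

namespace Stmt5Aux

variable {X : Type*} [NormedAddCommGroup X] [NormedSpace ℂ X]



lemma exists_chain (S : X →L[ℂ] X) (x : ℕ → X) (hli : LinearIndependent ℂ x)
    (hshift : IsGenBackwardOneShift S x) :
    ∃ Y : ℕ → X, S (Y 0) = 0 ∧ (∀ k, S (Y (k+1)) = Y k) ∧
      (Submodule.span ℂ (Set.range x) : Submodule ℂ X) ≤ Submodule.span ℂ (Set.range Y) := by
  classical
  set P : Submodule ℂ X := Submodule.span ℂ (Set.range x) with hP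
  let b : Module.Basis ℕ ℂ P := Module.Basis.span hli
  have hb : ∀ j, ((b j : P) : X) = x j := fun j => congrArg Subtype.val (Module.Basis.span_apply hli j)
  -- step 1 : preimages with degree control
  have exists_g : ∀ k : ℕ, ∃ p : P, S (p : X) = x k ∧ b.repr p (k+1) ≠ 0 ∧
      ∀ i, k+1 < i → b.repr p i = 0 := by
    intro k
    induction k using Nat.strong_induction_on with
    | _ k ih =>
      choose gp hg1 hg2 hg3 using ih
      obtain ⟨c, hc, hck⟩ := hshift.2 (k+1) (by omega)
      rw [show k + 1 - 1 = k from rfl] at hck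
      refine ⟨(c k)⁻¹ • (b (k+1) - ∑ i ∈ (range k).attach, c i.1 • gp i.1 (mem_range.mp i.2)),
        ?_, ?_, ?_⟩
      · have hcoe : ((((c k)⁻¹ • (b (k+1) - ∑ i ∈ (range k).attach,
            c i.1 • gp i.1 (mem_range.mp i.2))) : P) : X)
            = (c k)⁻¹ • ((x (k+1)) - ∑ i ∈ (range k).attach,
              c i.1 • (gp i.1 (mem_range.mp i.2) : X)) := by
          push_cast [hb]
          rfl
        rw [hcoe, map_smul, map_sub, map_sum]
        have : ∀ i ∈ (range k).attach,
            S (c i.1 • (gp i.1 (mem_range.mp i.2) : X)) = c i.1 • x i.1 := by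
          intro i _
          rw [map_smul, hg1]
        rw [Finset.sum_congr rfl this, hc]
        have hsplit : ∑ i ∈ range (k+1), c i • x i
            = (∑ i ∈ range k, c i • x i) + c k • x k := Finset.sum_range_succ _ _
        have hattach : ∑ i ∈ (range k).attach, c i.1 • x i.1 = ∑ i ∈ range k, c i • x i := by
          rw [← Finset.sum_attach (range k) (fun i => c i • x i)]
        rw [hsplit, hattach]
        rw [show (∑ i ∈ range k, c i • x i) + c k • x k - ∑ i ∈ range k, c i • x i
            = c k • x k by abel]
        rw [smul_smul, inv_mul_cancel₀ hck, one_smul]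
      · rw [map_smul, map_sub, map_sum, Module.Basis.repr_self]
        rw [Finsupp.smul_apply, Finsupp.sub_apply, Finsupp.single_apply]
        have : (∑ i ∈ (range k).attach, b.repr (c i.1 • gp i.1 (mem_range.mp i.2))) (k+1)
            = 0 := by
          rw [Finsupp.finset_sum_apply]
          refine Finset.sum_eq_zero fun i _ => ?_
          rw [map_smul, Finsupp.smul_apply, hg3 _ _ _ (by have := mem_range.mp i.2; omega),
            smul_zero]
        rw [this, if_pos rfl]
        simpa using inv_ne_zero hck
      · intro i hi
        rw [map_smul, map_sub, map_sum, Module.Basis.repr_self]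
        rw [Finsupp.smul_apply, Finsupp.sub_apply, Finsupp.single_apply]
        have : (∑ j ∈ (range k).attach, b.repr (c j.1 • gp j.1 (mem_range.mp j.2))) i = 0 := by
          rw [Finsupp.finset_sum_apply]
          refine Finset.sum_eq_zero fun j _ => ?_
          rw [map_smul, Finsupp.smul_apply, hg3 _ _ _ (by have := mem_range.mp j.2; omega),
            smul_zero]
        rw [this, if_neg (by omega)]
        simp
  choose g hg1 hg2 hg3 using exists_g
  -- step 2 : the right inverse F
  let F : P →ₗ[ℂ] P := b.constr ℂ g
  have hSF : ∀ w : P, S ((F w : P) : X) = (w : X) := by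
    have : (S.toLinearMap.comp (P.subtype.comp F)) = P.subtype := by
      refine b.ext fun j => ?_
      simp only [LinearMap.comp_apply, Submodule.subtype_apply,
        ContinuousLinearMap.coe_coe]
      rw [show F (b j) = g j from b.constr_basis ℂ g j]
      rw [hg1, hb]
    intro w
    exact congrArg (fun (L : P →ₗ[ℂ] X) => L w) this
  -- step 3 : the chain
  set Y : ℕ → X := fun k => (((F^k) (b 0) : P) : X) with hY
  refine ⟨Y, ?_, ?_, ?_⟩
  · show S (((F^0) (b 0) : P) : X) = 0
    rw [pow_zero, Module.End.one_apply, hb]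
    exact hshift.1
  · intro k
    show S (((F^(k+1)) (b 0) : P) : X) = _
    rw [pow_succ', Module.End.mul_apply]
    exact hSF _
  · -- density
    have deg : ∀ k, b.repr ((F^k) (b 0)) k ≠ 0 ∧ ∀ i, k < i → b.repr ((F^k) (b 0)) i = 0 := by
      intro k
      induction k with
      | zero =>
        rw [pow_zero, Module.End.one_apply, Module.Basis.repr_self]
        constructor
        · simp
        · intro i hi; rw [Finsupp.single_apply, if_neg (by omega)]
      | succ k ihk =>
        obtain ⟨hne, hup⟩ := ihk
        set w := (F^k) (b 0) with hw
        have hFw : (F^(k+1)) (b 0) = F w := by rw [pow_succ', Module.End.mul_apply]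
        have hre : ∀ i, b.repr (F w) i
            = ∑ j ∈ (b.repr w).support, (b.repr w) j * (b.repr (g j)) i := by
          intro i
          rw [show F w = (b.repr w).sum fun j a => a • g j from b.constr_apply ℂ g w]
          rw [Finsupp.sum, map_sum, Finsupp.finset_sum_apply]
          refine Finset.sum_congr rfl fun j _ => ?_
          rw [map_smul, Finsupp.smul_apply, smul_eq_mul]
        have hsupp : ∀ j ∈ (b.repr w).support, j ≤ k := by
          intro j hj
          by_contra hjk
          exact (Finsupp.mem_support_iff.mp hj) (hup j (by omega))
        constructor
        · rw [hFw, hre]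
          rw [Finset.sum_eq_single k]
          · exact mul_ne_zero hne (hg2 k)
          · intro j hj hjk
            have := hsupp j hj
            rw [hg3 _ _ (by omega), mul_zero]
          · intro hk
            exact absurd (Finsupp.mem_support_iff.mpr hne) hk
        · intro i hi
          rw [hFw, hre]
          refine Finset.sum_eq_zero fun j hj => ?_
          have := hsupp j hj
          rw [hg3 _ _ (by omega), mul_zero]
    have hx : ∀ k, x k ∈ Submodule.span ℂ (Set.range Y) := by
      intro k
      induction k using Nat.strong_induction_on with
      | _ k ih =>
        set w := (F^k) (b 0) with hw
        have hrepr : (w : X) = ∑ j ∈ (b.repr w).support, (b.repr w) j • x j := by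
          conv_lhs => rw [← b.linearCombination_repr w]
          rw [Finsupp.linearCombination_apply, Finsupp.sum]
          push_cast [hb]
          rfl
        have hksupp : k ∈ (b.repr w).support := Finsupp.mem_support_iff.mpr (deg k).1
        have hsplit : (w : X) = (b.repr w) k • x k
            + ∑ j ∈ (b.repr w).support.erase k, (b.repr w) j • x j := by
          rw [hrepr, ← Finset.add_sum_erase _ _ hksupp]
        have hxk : x k = ((b.repr w) k)⁻¹ •
            ((w : X) - ∑ j ∈ (b.repr w).support.erase k, (b.repr w) j • x j) := by
          rw [hsplit]
          rw [show (b.repr w) k • x k + (∑ j ∈ (b.repr w).support.erase k, (b.repr w) j • x j)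
              - ∑ j ∈ (b.repr w).support.erase k, (b.repr w) j • x j = (b.repr w) k • x k
              by abel]
          rw [smul_smul, inv_mul_cancel₀ (deg k).1, one_smul]
        rw [hxk]
        refine Submodule.smul_mem _ _ (Submodule.sub_mem _ ?_ ?_)
        · exact Submodule.subset_span ⟨k, rfl⟩
        · refine Submodule.sum_mem _ fun j hj => ?_
          have hjk : j ≤ k := by
            have := Finset.mem_of_mem_erase hj
            by_contra hc
            exact (Finsupp.mem_support_iff.mp this) ((deg k).2 j (by omega))
          have hjne : j ≠ k := Finset.ne_of_mem_erase hj
          exact Submodule.smul_mem _ _ (ih j (by omega))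
    rw [Submodule.span_le]
    rintro _ ⟨k, rfl⟩
    exact hx k



lemma choose_le_pow' (n : ℕ) : ∀ k, n.choose k ≤ n ^ k := by
  intro k
  induction k with
  | zero => simp
  | succ k ih =>
    have h := Nat.choose_succ_right_eq n k
    have h1 : n.choose (k+1) ≤ n.choose (k+1) * (k+1) := Nat.le_mul_of_pos_right _ (by omega)
    calc n.choose (k+1) ≤ n.choose k * (n - k) := by rw [← h]; exact h1
    _ ≤ n ^ k * n := Nat.mul_le_mul ih (by omega)
    _ = n ^ (k+1) := by ring

lemma choose_ratio_up (n k : ℕ) : ∀ p, n.choose (k+p) * (k+1)^p ≤ n.choose k * n^p := by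
  intro p
  induction p with
  | zero => simp
  | succ p ih =>
    have h := Nat.choose_succ_right_eq n (k+p)
    calc n.choose (k+p+1) * (k+1)^(p+1)
        = (n.choose (k+p+1) * (k+1)) * (k+1)^p := by ring
      _ ≤ (n.choose (k+p+1) * (k+p+1)) * (k+1)^p := by
          exact Nat.mul_le_mul_right _ (Nat.mul_le_mul_left _ (by omega))
      _ = (n.choose (k+p) * (n - (k+p))) * (k+1)^p := by rw [h]
      _ ≤ (n.choose (k+p) * (k+1)^p) * n := by
          rw [Nat.mul_right_comm]
          exact Nat.mul_le_mul_left _ (by omega)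
      _ ≤ (n.choose k * n^p) * n := Nat.mul_le_mul_right _ ih
      _ = n.choose k * n^(p+1) := by ring

lemma choose_ratio_down (n k : ℕ) (hk : k ≤ n) :
    ∀ p, p ≤ k → n.choose (k-p) * (n-k+1)^p ≤ n.choose k * k^p := by
  intro p
  induction p with
  | zero => simp
  | succ p ih =>
    intro hp
    have hp' : p ≤ k := by omega
    have key : n.choose (k-p-1) * (n-k+1) ≤ n.choose (k-p) * k := by
      have h := Nat.choose_succ_right_eq n (k-p-1)
      have h2 : k - p - 1 + 1 = k - p := by omega
      rw [h2] at h
      calc n.choose (k-p-1) * (n-k+1) ≤ n.choose (k-p-1) * (n - (k-p-1)) :=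
            Nat.mul_le_mul_left _ (by omega)
        _ = n.choose (k-p) * (k-p) := h.symm
        _ ≤ n.choose (k-p) * k := Nat.mul_le_mul_left _ (by omega)
    calc n.choose (k-(p+1)) * (n-k+1)^(p+1)
        = (n.choose (k-p-1) * (n-k+1)) * (n-k+1)^p := by
          rw [show k - (p+1) = k - p - 1 by omega]; ring
      _ ≤ (n.choose (k-p) * k) * (n-k+1)^p := Nat.mul_le_mul_right _ key
      _ = (n.choose (k-p) * (n-k+1)^p) * k := by ring
      _ ≤ (n.choose k * k^p) * k := Nat.mul_le_mul_right _ (ih hp')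
      _ = n.choose k * k^(p+1) := by ring

lemma choose_lower (n : ℕ) : ∀ k, (n+1-k)^k ≤ n.choose k * k.factorial := by
  intro k
  induction k with
  | zero => simp
  | succ k ih =>
    have h := Nat.choose_succ_right_eq n k
    calc (n+1-(k+1))^(k+1) = (n-k) * (n-k)^k := by rw [show n+1-(k+1) = n-k by omega]; ring
      _ ≤ (n-k) * (n+1-k)^k := Nat.mul_le_mul_left _ (Nat.pow_le_pow_left (by omega) _)
      _ ≤ (n-k) * (n.choose k * k.factorial) := Nat.mul_le_mul_left _ ih
      _ = (n.choose k * (n-k)) * k.factorial := by ring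
      _ = (n.choose (k+1) * (k+1)) * k.factorial := by rw [h]
      _ = n.choose (k+1) * (k+1).factorial := by rw [Nat.factorial_succ]; ring


variable {X : Type*} [NormedAddCommGroup X] [NormedSpace ℂ X]


lemma S_pow_apply (S : X →L[ℂ] X) (Y : ℕ → X) (hY0 : S (Y 0) = 0)
    (hYs : ∀ k, S (Y (k+1)) = Y k) :
    ∀ i k, (S^i) (Y k) = if i ≤ k then Y (k - i) else 0 := by
  intro i
  induction i with
  | zero => intro k; simp
  | succ i ih =>
    intro k
    rw [pow_succ, ContinuousLinearMap.mul_apply]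
    cases k with
    | zero =>
      rw [hY0, map_zero, if_neg (by omega)]
    | succ k =>
      rw [hYs k, ih k]
      by_cases h : i ≤ k
      · rw [if_pos h, if_pos (by omega), show k + 1 - (i+1) = k - i by omega]
      · rw [if_neg h, if_neg (by omega)]

lemma T_pow_apply (S : X →L[ℂ] X) (lam : ℂ) (Y : ℕ → X) (hY0 : S (Y 0) = 0)
    (hYs : ∀ k, S (Y (k+1)) = Y k) (n κ : ℕ) (hn : κ ≤ n) :
    ((lam • (1 : X →L[ℂ] X) + S)^n) (Y κ)
      = ∑ i ∈ range (κ+1), (n.choose i : ℂ) • lam^(n-i) • Y (κ - i) := by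
  have hcomm : Commute S (lam • (1 : X →L[ℂ] X)) :=
    (Commute.one_right S).smul_right lam
  have hTn : (lam • (1 : X →L[ℂ] X) + S)^n
      = ∑ i ∈ range (n+1), S^i * (lam • (1 : X →L[ℂ] X))^(n-i) * (n.choose i : X →L[ℂ] X) := by
    rw [show lam • (1 : X →L[ℂ] X) + S = S + lam • (1 : X →L[ℂ] X) from add_comm _ _]
    exact hcomm.add_pow n
  rw [hTn, ContinuousLinearMap.sum_apply]
  have hterm : ∀ i ∈ range (n+1),
      (S^i * (lam • (1 : X →L[ℂ] X))^(n-i) * (n.choose i : X →L[ℂ] X)) (Y κ)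
      = (n.choose i : ℂ) • lam^(n-i) • (if i ≤ κ then Y (κ - i) else 0) := by
    intro i _
    rw [ContinuousLinearMap.mul_apply, ContinuousLinearMap.mul_apply,
      ContinuousLinearMap.natCast_apply]
    rw [smul_pow, one_pow, ContinuousLinearMap.smul_apply, ContinuousLinearMap.one_apply]
    rw [← Nat.cast_smul_eq_nsmul ℂ (n.choose i) (Y κ), smul_comm,
      map_smul, map_smul, S_pow_apply S Y hY0 hYs i κ, smul_comm]
  rw [Finset.sum_congr rfl hterm]
  rw [← Finset.sum_subset (Finset.range_subset_range.mpr (by omega : κ + 1 ≤ n + 1))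
    (fun i _ hi => by rw [if_neg (by simp at hi ⊢; omega), smul_zero, smul_zero])]
  refine Finset.sum_congr rfl fun i hi => ?_
  rw [if_pos (by simp at hi; omega)]


set_option maxHeartbeats 2000000 in
lemma key (S : X →L[ℂ] X) (lam : ℂ) (hlam : ‖lam‖ = 1) (Y : ℕ → X)
    (hY0 : S (Y 0) = 0) (hYs : ∀ k, S (Y (k+1)) = Y k)
    (m : ℕ) (uc vc : ℕ → ℂ) :
    ∃ C : ℝ, 0 < C ∧ ∃ N₀ : ℕ, 0 < N₀ ∧ ∀ n : ℕ, N₀ ≤ n → ∃ z : X,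
      ‖z‖ * n ≤ C ∧
      ‖((lam • (1 : X →L[ℂ] X) + S)^n) ((∑ j ∈ range (m+1), uc j • Y j) + z)
          - ∑ j ∈ range (m+1), vc j • Y j‖ * n ≤ C := by
  classical
  set q := m + 1 with hqdef
  -- the depth sequence
  obtain ⟨κ, hκ0, hκs⟩ : ∃ κf : ℕ → ℕ, κf 0 = 8*q*q + m + 1 ∧
      ∀ l, κf (l+1) = 8*q*q*(κf l) + l + m + 2 :=
    ⟨fun l => Nat.rec (8*q*q + m + 1) (fun l prev => 8*q*q*prev + l + m + 2) l, rfl,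
      fun l => rfl⟩
  have hq1 : 1 ≤ q := by omega
  have hκge : ∀ l, m + 1 + l ≤ κ l := by
    intro l
    induction l with
    | zero => rw [hκ0]; omega
    | succ l ih =>
      rw [hκs l]
      have : 1 ≤ 8*q*q := by nlinarith
      nlinarith
  have hκpos : ∀ l, 1 ≤ κ l := fun l => le_trans (by omega) (hκge l)
  have hκmono : Monotone κ := by
    apply monotone_nat_of_le_succ
    intro l
    rw [hκs l]
    have h1 : κ l ≤ 8*q*q*(κ l) := Nat.le_mul_of_pos_left _ (by positivity)
    omega
  have hκrec : ∀ l, 8*q*q*(κ l) + 2 ≤ κ (l+1) - (l+1) + 1 := by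
    intro l
    have := hκs l
    have h1 : 1 ≤ κ l := hκpos l
    omega
  -- the scaling factors
  obtain ⟨M, hMdef⟩ : ∃ Mf : ℕ → ℕ, ∀ l, Mf l = ∏ t ∈ range l, (4*q*(κ t)) :=
    ⟨_, fun l => rfl⟩
  have hM1 : ∀ l, 1 ≤ M l := by
    intro l
    rw [hMdef]
    refine Finset.one_le_prod' fun t _ => ?_
    have := hκpos t
    nlinarith
  have hMmono : ∀ {a b_}, a ≤ b_ → M a ≤ M b_ := by
    intro a b_ hab
    rw [hMdef, hMdef]
    refine Finset.prod_le_prod_of_subset_of_one_le' (by simp [range_subset_range, hab]) ?_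
    intro t _ _
    have := hκpos t
    nlinarith
  have hMsplit : ∀ {a b_ : ℕ}, a ≤ b_ → M b_ = M a * ∏ t ∈ Ico a b_, (4*q*(κ t)) := by
    intro a b_ hab
    rw [hMdef, hMdef]
    exact (Finset.prod_range_mul_prod_Ico _ hab).symm
  -- constants
  obtain ⟨Bc, hBcdef⟩ : ∃ r : ℝ,
      r = (∑ d ∈ range (m+1), ‖uc d‖) + (∑ j ∈ range (m+1), ‖vc j‖) + 1 := ⟨_, rfl⟩
  have hBc1 : 1 ≤ Bc := by
    have h1 : 0 ≤ ∑ d ∈ range (m+1), ‖uc d‖ := Finset.sum_nonneg fun _ _ => norm_nonneg _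
    have h2 : 0 ≤ ∑ j ∈ range (m+1), ‖vc j‖ := Finset.sum_nonneg fun _ _ => norm_nonneg _
    rw [hBcdef]; linarith
  have hBc0 : 0 < Bc := lt_of_lt_of_le one_pos hBc1
  obtain ⟨CA, hCAdef⟩ : ∃ r : ℝ,
      r = 2*Bc*((M m : ℕ):ℝ)*(2:ℝ)^(κ m)*(((κ m).factorial : ℕ):ℝ) := ⟨_, rfl⟩
  obtain ⟨SY, hSYdef⟩ : ∃ r : ℝ, r = ∑ l ∈ range q, ‖Y (κ l)‖ := ⟨_, rfl⟩
  obtain ⟨SY2, hSY2def⟩ : ∃ r : ℝ, r = ∑ j ∈ range (κ m + 1), ‖Y j‖ := ⟨_, rfl⟩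
  obtain ⟨CJ, hCJdef⟩ : ∃ r : ℝ, r = 2*Bc*((M m : ℕ):ℝ)*(((2*κ m : ℕ):ℝ))^(κ m) := ⟨_, rfl⟩
  have hCAnn : 0 ≤ CA := by
    rw [hCAdef]
    have := hBc0
    positivity
  have hSYnn : 0 ≤ SY := by
    rw [hSYdef]; exact Finset.sum_nonneg fun _ _ => norm_nonneg _
  have hSY2nn : 0 ≤ SY2 := by
    rw [hSY2def]; exact Finset.sum_nonneg fun _ _ => norm_nonneg _
  have hCJnn : 0 ≤ CJ := by
    rw [hCJdef]
    have := hBc0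
    positivity
  refine ⟨(CA * SY) + ((q:ℝ) * CJ * SY2) + 1, ?_, 2*(κ m)+2, by omega, ?_⟩
  · have h1 : 0 ≤ CA * SY := mul_nonneg hCAnn hSYnn
    have h2 : 0 ≤ (q:ℝ) * CJ * SY2 :=
      mul_nonneg (mul_nonneg (Nat.cast_nonneg _) hCJnn) hSY2nn
    linarith
  intro n hn
  -- basic facts about n
  have hn1 : 1 ≤ n := by omega
  have hκn : ∀ l, l ≤ m → 2 * κ l + 2 ≤ n := by
    intro l hl
    have := hκmono hl
    omega
  have hlam0 : lam ≠ 0 := by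
    intro h; rw [h] at hlam; simp at hlam
  have hnC0 : (n:ℂ) ≠ 0 := Nat.cast_ne_zero.mpr (by omega)
  have hchoose0 : ∀ a, a ≤ n → ((n.choose a : ℕ) : ℂ) ≠ 0 :=
    fun a ha => Nat.cast_ne_zero.mpr (Nat.choose_pos ha).ne'
  -- Fin q data
  have hfm : ∀ l : Fin q, (l:ℕ) ≤ m := fun l => by have := l.isLt; omega
  have hκlen : ∀ l : ℕ, l ≤ m → κ l ≤ n := fun l hl => by have := hκn l hl; omega
  -- ℕ inequalities
  have caseA : ∀ j' l' : ℕ, j' < l' → l' ≤ m →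
      n^j' * n.choose (κ l' - j') * M l' * (2*q) ≤ n^l' * n.choose (κ l' - l') * M j' := by
    intro j' l' hjl hlm
    have hge := hκge l'
    set k := κ l' - l' with hk
    set p := l' - j' with hp
    have hkp : κ l' - j' = k + p := by omega
    have hMl : M l' = M j' * ∏ t ∈ Ico j' l', (4*q*(κ t)) := hMsplit (le_of_lt hjl)
    have hPP : (∏ t ∈ Ico j' l', (4*q*(κ t))) ≤ (4*q*(κ (l'-1)))^p := by
      have hb : ∀ t ∈ Ico j' l', 4*q*(κ t) ≤ 4*q*(κ (l'-1)) := by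
        intro t ht
        have ht2 := (mem_Ico.mp ht).2
        exact Nat.mul_le_mul_left _ (hκmono (by omega))
      calc (∏ t ∈ Ico j' l', (4*q*(κ t))) ≤ (4*q*(κ (l'-1)))^((Ico j' l').card) :=
            Finset.prod_le_pow_card _ _ _ hb
        _ = (4*q*(κ (l'-1)))^p := by rw [Nat.card_Ico]
    have hbig : 2*q*(4*q*(κ (l'-1)))^p ≤ (k+1)^p := by
      have h8 : 8*q*q*(κ (l'-1)) + 2 ≤ k + 1 := by
        have h9 := hκrec (l'-1)
        rw [show l' - 1 + 1 = l' by omega] at h9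
        omega
      have hp1 : 1 ≤ p := by omega
      calc 2*q*(4*q*(κ (l'-1)))^p ≤ (2*q)^p * (4*q*(κ (l'-1)))^p :=
            Nat.mul_le_mul_right _ (Nat.le_self_pow (by omega) _)
        _ = (2*q*(4*q*(κ (l'-1))))^p := (Nat.mul_pow _ _ _).symm
        _ ≤ (k+1)^p := by
            refine Nat.pow_le_pow_left ?_ _
            calc 2*q*(4*q*(κ (l'-1))) = 8*q*q*(κ (l'-1)) := by ring
              _ ≤ k+1 := by omega
    calc n^j' * n.choose (κ l' - j') * M l' * (2*q)
        = (2*q * (∏ t ∈ Ico j' l', (4*q*(κ t)))) * (n^j' * n.choose (k+p)) * M j' := by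
          rw [hMl, hkp]; ring
      _ ≤ ((k+1)^p) * (n^j' * n.choose (k+p)) * M j' := by
          refine Nat.mul_le_mul_right _ (Nat.mul_le_mul_right _ ?_)
          calc 2*q*(∏ t ∈ Ico j' l', (4*q*(κ t))) ≤ 2*q*(4*q*(κ (l'-1)))^p :=
                Nat.mul_le_mul_left _ hPP
            _ ≤ (k+1)^p := hbig
      _ = n^j' * (n.choose (k+p) * (k+1)^p) * M j' := by ring
      _ ≤ n^j' * (n.choose k * n^p) * M j' :=
          Nat.mul_le_mul_right _ (Nat.mul_le_mul_left _ (choose_ratio_up n k p))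
      _ = n^l' * n.choose k * M j' := by
          rw [show n^j' * (n.choose k * n^p) = n^(j'+p) * n.choose k by rw [pow_add]; ring,
            show j' + p = l' from by omega]
  have caseB : ∀ j' l' : ℕ, l' < j' → l' ≤ m → j' ≤ κ l' →
      n^j' * n.choose (κ l' - j') * M l' * (2*q) ≤ n^l' * n.choose (κ l' - l') * M j' := by
    intro j' l' hlj hlm hjκ
    have hge := hκge l'
    set k := κ l' - l' with hk
    set p := j' - l' with hp
    have hkn : k ≤ n := le_trans (Nat.sub_le _ _) (hκlen l' hlm)
    have hpk : p ≤ k := by omega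
    have hkp : κ l' - j' = k - p := by omega
    have hMj : M j' = M l' * ∏ t ∈ Ico l' j', (4*q*(κ t)) := hMsplit (le_of_lt hlj)
    have hPP : (4*q*(κ l'))^p ≤ ∏ t ∈ Ico l' j', (4*q*(κ t)) := by
      have hb : ∀ t ∈ Ico l' j', 4*q*(κ l') ≤ 4*q*(κ t) := by
        intro t ht
        exact Nat.mul_le_mul_left _ (hκmono (mem_Ico.mp ht).1)
      calc (4*q*(κ l'))^p = (4*q*(κ l'))^((Ico l' j').card) := by rw [Nat.card_Ico]
        _ ≤ _ := Finset.pow_card_le_prod _ _ _ hb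
    have h2k : n ≤ 2*(n-k+1) := by
      have hκm : κ l' ≤ κ m := hκmono hlm
      omega
    have key : 2*q * n^p * n.choose (k-p) * (n-k+1)^p
        ≤ (n.choose k * ∏ t ∈ Ico l' j', (4*q*(κ t))) * (n-k+1)^p := by
      calc 2*q * n^p * n.choose (k-p) * (n-k+1)^p
          = 2*q * n^p * (n.choose (k-p) * (n-k+1)^p) := by ring
        _ ≤ 2*q * n^p * (n.choose k * k^p) :=
            Nat.mul_le_mul_left _ (choose_ratio_down n k hkn p hpk)
        _ = n.choose k * (2*q * (n*k)^p) := by rw [Nat.mul_pow]; ring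
        _ ≤ n.choose k * ((2*q)^p * (n*k)^p) :=
            Nat.mul_le_mul_left _ (Nat.mul_le_mul_right _ (Nat.le_self_pow (by omega) _))
        _ = n.choose k * (2*q*(n*k))^p := by rw [← Nat.mul_pow]
        _ ≤ n.choose k * (4*q*k*(n-k+1))^p := by
            refine Nat.mul_le_mul_left _ (Nat.pow_le_pow_left ?_ _)
            calc 2*q*(n*k) = (2*q*k)*n := by ring
              _ ≤ (2*q*k)*(2*(n-k+1)) := Nat.mul_le_mul_left _ h2k
              _ = 4*q*k*(n-k+1) := by ring
        _ = n.choose k * ((4*q*k)^p * (n-k+1)^p) := by rw [show 4*q*k*(n-k+1) = (4*q*k)*(n-k+1) by ring, Nat.mul_pow]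
        _ ≤ n.choose k * ((∏ t ∈ Ico l' j', (4*q*(κ t))) * (n-k+1)^p) := by
            refine Nat.mul_le_mul_left _ (Nat.mul_le_mul_right _ (le_trans ?_ hPP))
            exact Nat.pow_le_pow_left (Nat.mul_le_mul_left _ (by omega)) _
        _ = (n.choose k * ∏ t ∈ Ico l' j', (4*q*(κ t))) * (n-k+1)^p := by ring
    have key2 : 2*q * n^p * n.choose (k-p) ≤ n.choose k * ∏ t ∈ Ico l' j', (4*q*(κ t)) :=
      Nat.le_of_mul_le_mul_right key (by positivity)
    calc n^j' * n.choose (κ l' - j') * M l' * (2*q)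
        = (2*q * n^p * n.choose (k-p)) * (n^l' * M l') := by
          rw [hkp, show j' = l' + p from by omega, pow_add]; ring
      _ ≤ (n.choose k * ∏ t ∈ Ico l' j', (4*q*(κ t))) * (n^l' * M l') :=
          Nat.mul_le_mul_right _ key2
      _ = n^l' * n.choose k * M j' := by rw [hMj]; ring
  have caseJ : ∀ l' j' : ℕ, l' ≤ m → m < j' → j' ≤ κ l' →
      n^(m+1) * n.choose (κ l' - j') ≤ n^l' * n.choose (κ l' - l') * (2*κ m)^(κ m) := by
    intro l' j' hlm hmj hjκ
    have hge := hκge l'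
    have hκm : κ l' ≤ κ m := hκmono hlm
    set k := κ l' - l' with hk
    set p := j' - l' with hp
    have hkn : k ≤ n := le_trans (Nat.sub_le _ _) (hκlen l' hlm)
    have hpk : p ≤ k := by omega
    have hkp : κ l' - j' = k - p := by omega
    have h2k : n ≤ 2*(n-k+1) := by omega
    have key : n^(m+1) * n.choose (k-p) * (n-k+1)^p
        ≤ (n^l' * n.choose k * (2*κ m)^(κ m)) * (n-k+1)^p := by
      calc n^(m+1) * n.choose (k-p) * (n-k+1)^p
          ≤ n^(l'+p) * (n.choose (k-p) * (n-k+1)^p) := by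
            rw [mul_assoc]
            exact Nat.mul_le_mul_right _ (Nat.pow_le_pow_right (by omega) (by omega))
        _ ≤ n^(l'+p) * (n.choose k * k^p) :=
            Nat.mul_le_mul_left _ (choose_ratio_down n k hkn p hpk)
        _ = n^l' * n.choose k * (n*k)^p := by rw [pow_add, Nat.mul_pow]; ring
        _ ≤ n^l' * n.choose k * ((2*(n-k+1))*k)^p := by
            refine Nat.mul_le_mul_left _ (Nat.pow_le_pow_left ?_ _)
            exact Nat.mul_le_mul_right _ h2k
        _ = n^l' * n.choose k * ((2*k)^p * (n-k+1)^p) := by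
            rw [show (2*(n-k+1))*k = (2*k)*(n-k+1) by ring, Nat.mul_pow]
        _ ≤ n^l' * n.choose k * ((2*κ m)^(κ m) * (n-k+1)^p) := by
            refine Nat.mul_le_mul_left _ (Nat.mul_le_mul_right _ ?_)
            calc (2*k)^p ≤ (2*κ m)^p := Nat.pow_le_pow_left (by omega) _
              _ ≤ (2*κ m)^(κ m) := Nat.pow_le_pow_right (by have := hκpos m; omega) (by omega)
        _ = (n^l' * n.choose k * (2*κ m)^(κ m)) * (n-k+1)^p := by ring
    rw [hkp]
    exact Nat.le_of_mul_le_mul_right key (by positivity)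
  have caseZ : ∀ l' : ℕ, l' ≤ m →
      n^(m+1) ≤ n^l' * n.choose (κ l' - l') * (2^(κ m) * (κ m).factorial) := by
    intro l' hlm
    have hge := hκge l'
    have hκm : κ l' ≤ κ m := hκmono hlm
    set k := κ l' - l' with hk
    have hkn : k ≤ n := le_trans (Nat.sub_le _ _) (hκlen l' hlm)
    have h2k : n ≤ 2*(n+1-k) := by omega
    calc n^(m+1) ≤ n^(l'+k) := Nat.pow_le_pow_right (by omega) (by omega)
      _ = n^l' * n^k := pow_add n l' k
      _ ≤ n^l' * ((2*(n+1-k))^k) :=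
          Nat.mul_le_mul_left _ (Nat.pow_le_pow_left h2k _)
      _ = n^l' * (2^k * (n+1-k)^k) := by rw [Nat.mul_pow]
      _ ≤ n^l' * (2^k * (n.choose k * k.factorial)) :=
          Nat.mul_le_mul_left _ (Nat.mul_le_mul_left _ (choose_lower n k))
      _ = n^l' * n.choose k * (2^k * k.factorial) := by ring
      _ ≤ n^l' * n.choose k * (2^(κ m) * (κ m).factorial) := by
          refine Nat.mul_le_mul_left _ (Nat.mul_le_mul ?_ ?_)
          · exact Nat.pow_le_pow_right (by omega) (by omega)
          · exact Nat.factorial_le (by omega)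
  -- the matrix
  obtain ⟨A, hAdef⟩ : ∃ Af : Fin q → Fin q → ℂ, ∀ j l : Fin q, Af j l =
      lam^(j:ℕ) * (lam^(l:ℕ))⁻¹ * (n:ℂ)^(j:ℕ) * ((n:ℂ)^(l:ℕ))⁻¹
        * (n.choose (κ (l:ℕ) - (j:ℕ)) : ℂ) * ((n.choose (κ (l:ℕ) - (l:ℕ)) : ℂ))⁻¹
        * ((M (l:ℕ)) : ℂ) * (((M (j:ℕ)) : ℂ))⁻¹ := ⟨_, fun _ _ => rfl⟩
  have hM0C : ∀ a : ℕ, ((M a : ℕ) : ℂ) ≠ 0 := fun a =>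
    Nat.cast_ne_zero.mpr (by have := hM1 a; omega)
  have hCk0 : ∀ l : Fin q, ((n.choose (κ (l:ℕ) - (l:ℕ)) : ℕ) : ℂ) ≠ 0 := fun l =>
    hchoose0 _ (le_trans (Nat.sub_le _ _) (hκlen _ (hfm l)))
  have hAdiag : ∀ j, A j j = 1 := by
    intro j
    rw [hAdef]
    field_simp
    exact div_self (mul_ne_zero (hCk0 j) (hM0C _))
  have hAnorm : ∀ j l : Fin q, ‖A j l‖ =
      ((n^(j:ℕ) * n.choose (κ (l:ℕ) - (j:ℕ)) * M (l:ℕ) : ℕ) : ℝ)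
        / ((n^(l:ℕ) * n.choose (κ (l:ℕ) - (l:ℕ)) * M (j:ℕ) : ℕ) : ℝ) := by
    intro j l
    rw [hAdef]
    push_cast
    rw [norm_mul, norm_mul, norm_mul, norm_mul, norm_mul, norm_mul, norm_mul]
    rw [norm_inv, norm_inv, norm_inv, norm_inv, norm_pow, norm_pow, norm_pow, norm_pow]
    rw [hlam]
    simp only [Complex.norm_natCast, one_pow, inv_one, one_mul, mul_one]
    ring
  have hAbound : ∀ j l : Fin q, j ≠ l → ‖A j l‖ ≤ 1 / (2*(q:ℝ)) := by
    intro j l hjl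
    rw [hAnorm]
    have hd1 : (0:ℝ) < ((n^(l:ℕ) * n.choose (κ (l:ℕ) - (l:ℕ)) * M (j:ℕ) : ℕ) : ℝ) := by
      have h1 : 0 < n^(l:ℕ) := Nat.pow_pos (by omega)
      have h2 : 0 < n.choose (κ (l:ℕ) - (l:ℕ)) :=
        Nat.choose_pos (le_trans (Nat.sub_le _ _) (hκlen _ (hfm l)))
      have h3 := hM1 (j:ℕ)
      positivity
    rw [div_le_div_iff₀ hd1 (by positivity)]
    rw [one_mul]
    have hq0 : (0:ℝ) < 2*(q:ℝ) := by positivity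
    rcases lt_or_gt_of_ne (fun h => hjl (Fin.ext h) : (j:ℕ) ≠ (l:ℕ)) with h | h
    · have := caseA (j:ℕ) (l:ℕ) h (hfm l)
      calc ((n^(j:ℕ) * n.choose (κ (l:ℕ) - (j:ℕ)) * M (l:ℕ) : ℕ) : ℝ) * (2*(q:ℝ))
          = ((n^(j:ℕ) * n.choose (κ (l:ℕ) - (j:ℕ)) * M (l:ℕ) * (2*q) : ℕ) : ℝ) := by
            push_cast; ring
        _ ≤ _ := by exact_mod_cast Nat.cast_le.mpr this
    · have := caseB (j:ℕ) (l:ℕ) h (hfm l) (le_trans (le_trans (hfm j) (by omega)) (hκge (l:ℕ)))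
      calc ((n^(j:ℕ) * n.choose (κ (l:ℕ) - (j:ℕ)) * M (l:ℕ) : ℕ) : ℝ) * (2*(q:ℝ))
          = ((n^(j:ℕ) * n.choose (κ (l:ℕ) - (j:ℕ)) * M (l:ℕ) * (2*q) : ℕ) : ℝ) := by
            push_cast; ring
        _ ≤ _ := by exact_mod_cast Nat.cast_le.mpr this
  -- the target vector
  obtain ⟨c, hcdef⟩ : ∃ cf : Fin q → ℂ, ∀ j : Fin q, cf j =
      vc (j:ℕ) - ∑ d ∈ range (m+1), (if (j:ℕ) ≤ d then
        uc d * (n.choose (d - (j:ℕ)) : ℂ) * lam^(n - (d - (j:ℕ))) else 0) := ⟨_, fun _ => rfl⟩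
  have hcb : ∀ j : Fin q, ‖c j‖ * (n:ℝ)^(j:ℕ) ≤ Bc * (n:ℝ)^m := by
    intro j
    have hnn : (1:ℝ) ≤ (n:ℝ) := by exact_mod_cast hn1
    have h1 : ‖c j‖ ≤ ‖vc (j:ℕ)‖ + ∑ d ∈ range (m+1),
        (if (j:ℕ) ≤ d then ‖uc d‖ * ((n.choose (d - (j:ℕ)) : ℕ):ℝ) else 0) := by
      rw [hcdef]
      refine le_trans (norm_sub_le _ _) (add_le_add le_rfl ?_)
      refine le_trans (norm_sum_le _ _) (Finset.sum_le_sum fun d _ => ?_)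
      by_cases hjd : (j:ℕ) ≤ d
      · rw [if_pos hjd, if_pos hjd, norm_mul, norm_mul, norm_pow, hlam, one_pow, mul_one,
          Complex.norm_natCast]
      · rw [if_neg hjd, if_neg hjd, norm_zero]
    calc ‖c j‖ * (n:ℝ)^(j:ℕ)
        ≤ (‖vc (j:ℕ)‖ + ∑ d ∈ range (m+1),
            (if (j:ℕ) ≤ d then ‖uc d‖ * ((n.choose (d - (j:ℕ)) : ℕ):ℝ) else 0)) * (n:ℝ)^(j:ℕ) :=
          mul_le_mul_of_nonneg_right h1 (by positivity)
      _ = ‖vc (j:ℕ)‖ * (n:ℝ)^(j:ℕ) + ∑ d ∈ range (m+1),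
            (if (j:ℕ) ≤ d then ‖uc d‖ * ((n.choose (d - (j:ℕ)) : ℕ):ℝ) else 0) * (n:ℝ)^(j:ℕ) := by
          rw [add_mul, Finset.sum_mul]
      _ ≤ ‖vc (j:ℕ)‖ * (n:ℝ)^m + ∑ d ∈ range (m+1), ‖uc d‖ * (n:ℝ)^m := by
          refine add_le_add ?_ (Finset.sum_le_sum fun d hd => ?_)
          · exact mul_le_mul_of_nonneg_left
              (pow_le_pow_right₀ hnn (hfm j)) (norm_nonneg _)
          · by_cases hjd : (j:ℕ) ≤ d
            · rw [if_pos hjd]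
              have hdm : d ≤ m := by have := mem_range.mp hd; omega
              have hch : ((n.choose (d - (j:ℕ)) : ℕ):ℝ) ≤ (n:ℝ)^(d - (j:ℕ)) := by
                exact_mod_cast Nat.cast_le.mpr (choose_le_pow' n (d - (j:ℕ)))
              calc ‖uc d‖ * ((n.choose (d - (j:ℕ)) : ℕ):ℝ) * (n:ℝ)^(j:ℕ)
                  ≤ ‖uc d‖ * (n:ℝ)^(d - (j:ℕ)) * (n:ℝ)^(j:ℕ) := by
                    refine mul_le_mul_of_nonneg_right
                      (mul_le_mul_of_nonneg_left hch (norm_nonneg _)) (by positivity)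
                _ = ‖uc d‖ * (n:ℝ)^d := by
                    rw [mul_assoc, ← pow_add, show d - (j:ℕ) + (j:ℕ) = d from by omega]
                _ ≤ ‖uc d‖ * (n:ℝ)^m :=
                    mul_le_mul_of_nonneg_left (pow_le_pow_right₀ hnn hdm) (norm_nonneg _)
            · rw [if_neg hjd, zero_mul]
              positivity
      _ ≤ Bc * (n:ℝ)^m := by
          have hv : ‖vc (j:ℕ)‖ ≤ ∑ d ∈ range (m+1), ‖vc d‖ :=
            Finset.single_le_sum (fun d _ => norm_nonneg (vc d))
              (mem_range.mpr (by have := hfm j; omega))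
          have hsum : ∑ d ∈ range (m+1), ‖uc d‖ * (n:ℝ)^m
              = (∑ d ∈ range (m+1), ‖uc d‖) * (n:ℝ)^m := by rw [Finset.sum_mul]
          rw [hsum, ← add_mul]
          refine mul_le_mul_of_nonneg_right ?_ (by positivity)
          rw [hBcdef]
          linarith
  obtain ⟨δv, hδdef⟩ : ∃ δf : Fin q → ℂ, ∀ j : Fin q, δf j =
      c j * (n:ℂ)^(j:ℕ) * (((n:ℂ))^m)⁻¹ * (((M (j:ℕ)) : ℕ):ℂ)⁻¹ := ⟨_, fun _ => rfl⟩
  have hδb : ∀ j : Fin q, ‖δv j‖ ≤ Bc := by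
    intro j
    have hM0 : (0:ℝ) < ((M (j:ℕ) : ℕ):ℝ) := by exact_mod_cast hM1 (j:ℕ)
    have hd : ‖δv j‖ = ‖c j‖ * (n:ℝ)^(j:ℕ) / ((n:ℝ)^m * ((M (j:ℕ) : ℕ):ℝ)) := by
      rw [hδdef]
      rw [norm_mul, norm_mul, norm_mul, norm_inv, norm_inv, norm_pow, norm_pow,
        Complex.norm_natCast, Complex.norm_natCast]
      rw [div_eq_mul_inv, mul_inv]
      ring
    rw [hd, div_le_iff₀ (by positivity)]
    calc ‖c j‖ * (n:ℝ)^(j:ℕ) ≤ Bc * (n:ℝ)^m := hcb j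
      _ ≤ Bc * ((n:ℝ)^m * ((M (j:ℕ) : ℕ):ℝ)) := by
          rw [← mul_assoc]
          refine le_mul_of_one_le_right (by positivity) ?_
          exact_mod_cast hM1 (j:ℕ)
  -- solving the linear system
  obtain ⟨E, hEdef⟩ : ∃ Ef : Fin q → Fin q → ℂ, ∀ j l : Fin q,
      Ef j l = if j = l then 0 else A j l := ⟨_, fun _ _ => rfl⟩
  obtain ⟨w, hwj, hwb⟩ : ∃ w : Fin q → ℂ,
      (∀ j : Fin q, ∑ l ∈ univ, A j l * w l = δv j) ∧ (∀ l : Fin q, ‖w l‖ ≤ 2 * Bc) := by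
    have hE0 : ∀ j l, ‖E j l‖ ≤ 1/(2*(q:ℝ)) := by
      intro j l
      rw [hEdef]
      by_cases h : j = l
      · rw [if_pos h, norm_zero]
        positivity
      · rw [if_neg h]
        exact hAbound j l h
    obtain ⟨e, hedef⟩ : ∃ e' : (Fin q → ℂ) →L[ℂ] (Fin q → ℂ),
        e' = LinearMap.toContinuousLinearMap (Matrix.toLin' (Matrix.of E)) := ⟨_, rfl⟩
    have heapp : ∀ (vec : Fin q → ℂ) (j : Fin q), e vec j = ∑ l ∈ univ, E j l * vec l := by
      intro vec j
      simp [hedef, Matrix.toLin'_apply, Matrix.mulVec, dotProduct]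
    have heb : ∀ vec : Fin q → ℂ, ‖e vec‖ ≤ (1:ℝ)/2 * ‖vec‖ := by
      intro vec
      have hq0 : (0:ℝ) < (q:ℝ) := by exact_mod_cast hq1
      rw [pi_norm_le_iff_of_nonneg (by positivity)]
      intro j
      rw [heapp]
      calc ‖∑ l ∈ univ, E j l * vec l‖ ≤ ∑ l ∈ univ, ‖E j l * vec l‖ := norm_sum_le _ _
        _ ≤ ∑ _l ∈ (univ : Finset (Fin q)), (1/(2*(q:ℝ))) * ‖vec‖ := by
            refine Finset.sum_le_sum fun l _ => ?_
            rw [norm_mul]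
            exact mul_le_mul (hE0 j l) (norm_le_pi_norm vec l) (norm_nonneg _) (by positivity)
        _ = (q:ℝ) * ((1/(2*(q:ℝ))) * ‖vec‖) := by
            rw [Finset.sum_const, card_univ, Fintype.card_fin, nsmul_eq_mul]
        _ = 1/2 * ‖vec‖ := by
            field_simp
    have heop : ‖e‖ ≤ 1/2 := ContinuousLinearMap.opNorm_le_bound _ (by norm_num) heb
    have hlt : ‖-e‖ < 1 := by
      rw [norm_neg]
      calc ‖e‖ ≤ 1/2 := heop
        _ < 1 := by norm_num
    set u := Units.oneSub (-e) hlt with hudef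
    obtain ⟨w, hwdef⟩ : ∃ w : Fin q → ℂ,
        w = (↑u⁻¹ : (Fin q → ℂ) →L[ℂ] (Fin q → ℂ)) δv := ⟨_, rfl⟩
    have huv : (↑u : (Fin q → ℂ) →L[ℂ] (Fin q → ℂ)) = 1 + e := by
      rw [hudef, Units.val_oneSub, sub_neg_eq_add]
    have hsolve : w + e w = δv := by
      have h1 : (↑u : (Fin q → ℂ) →L[ℂ] (Fin q → ℂ))
          ((↑u⁻¹ : (Fin q → ℂ) →L[ℂ] (Fin q → ℂ)) δv) = δv := by
        rw [← ContinuousLinearMap.mul_apply, Units.mul_inv]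
        rfl
      rw [huv] at h1
      rw [hwdef]
      have h2 := ContinuousLinearMap.add_apply (1 : (Fin q → ℂ) →L[ℂ] (Fin q → ℂ)) e
        ((↑u⁻¹ : (Fin q → ℂ) →L[ℂ] (Fin q → ℂ)) δv)
      rw [ContinuousLinearMap.one_apply] at h2
      rw [← h2]
      exact h1
    refine ⟨w, ?_, ?_⟩
    · intro j
      have hAsplit : ∀ l, A j l = (if j = l then (1:ℂ) else 0) + E j l := by
        intro l
        rw [hEdef]
        by_cases h : j = l
        · rw [if_pos h, if_pos h, h, hAdiag l, add_zero]
        · rw [if_neg h, if_neg h, zero_add]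
      calc ∑ l ∈ univ, A j l * w l
          = ∑ l ∈ univ, ((if j = l then (1:ℂ) else 0) * w l + E j l * w l) := by
            refine Finset.sum_congr rfl fun l _ => ?_
            rw [hAsplit l, add_mul]
        _ = (∑ l ∈ univ, if j = l then w l else 0) + ∑ l ∈ univ, E j l * w l := by
            rw [Finset.sum_add_distrib]
            congr 1
            refine Finset.sum_congr rfl fun l _ => ?_
            rw [ite_mul, one_mul, zero_mul]
        _ = w j + e w j := by
            rw [Finset.sum_ite_eq, if_pos (mem_univ j), heapp]
        _ = δv j := by
            rw [← Pi.add_apply, hsolve]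
    · intro l
      have hδn : ‖δv‖ ≤ Bc := by
        rw [pi_norm_le_iff_of_nonneg hBc0.le]
        exact hδb
      have hwn : ‖w‖ ≤ 2 * Bc := by
        have hw1 : w = δv - e w := by
          rw [← hsolve]
          abel
        have hw2 : ‖w‖ ≤ ‖δv‖ + ‖e w‖ := by
          calc ‖w‖ = ‖δv - e w‖ := congrArg _ hw1
            _ ≤ ‖δv‖ + ‖e w‖ := norm_sub_le _ _
        have hw3 := heb w
        linarith
      exact le_trans (norm_le_pi_norm w l) hwn
  -- the perturbation z
  obtain ⟨α, hαdef⟩ : ∃ αf : Fin q → ℂ, ∀ l : Fin q, αf l =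
      lam^(κ (l:ℕ)) * (lam^(n + (l:ℕ)))⁻¹ * ((n.choose (κ (l:ℕ) - (l:ℕ)) : ℕ):ℂ)⁻¹
        * (n:ℂ)^m * ((n:ℂ)^(l:ℕ))⁻¹ * ((M (l:ℕ) : ℕ):ℂ) * w l := ⟨_, fun _ => rfl⟩
  have hαnorm : ∀ l : Fin q, ‖α l‖ =
      ((M (l:ℕ) : ℕ):ℝ) * (n:ℝ)^m * ‖w l‖
        / ((n:ℝ)^(l:ℕ) * ((n.choose (κ (l:ℕ) - (l:ℕ)) : ℕ):ℝ)) := by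
    intro l
    rw [hαdef]
    rw [norm_mul, norm_mul, norm_mul, norm_mul, norm_mul, norm_mul,
      norm_inv, norm_inv, norm_inv, norm_pow, norm_pow, norm_pow, norm_pow, hlam,
      Complex.norm_natCast, Complex.norm_natCast, Complex.norm_natCast]
    rw [div_eq_mul_inv, mul_inv]
    ring
  -- the system in original coordinates
  have hEq : ∀ j : Fin q, (∑ l ∈ univ,
      α l * ((n.choose (κ (l:ℕ) - (j:ℕ)) : ℕ):ℂ) * lam^(n - (κ (l:ℕ) - (j:ℕ)))) = c j := by
    intro j
    have hfac := congrArg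
      (fun t : ℂ => t * ((((M (j:ℕ)) : ℕ):ℂ) * (n:ℂ)^m * ((n:ℂ)^(j:ℕ))⁻¹)) (hwj j)
    have hR : δv j * ((((M (j:ℕ)) : ℕ):ℂ) * (n:ℂ)^m * ((n:ℂ)^(j:ℕ))⁻¹) = c j := by
      rw [hδdef]
      have e1 : ((n:ℂ)^(j:ℕ)) ≠ 0 := pow_ne_zero _ hnC0
      have e2 : ((n:ℂ)^m) ≠ 0 := pow_ne_zero _ hnC0
      have e3 := hM0C (j:ℕ)
      field_simp
    rw [hR] at hfac
    rw [← hfac, Finset.sum_mul]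
    refine Finset.sum_congr rfl fun l _ => ?_
    have hjκ : (j:ℕ) ≤ κ (l:ℕ) := le_trans (le_trans (hfm j) (by omega)) (hκge _)
    have hκn' : κ (l:ℕ) ≤ n := hκlen _ (hfm l)
    have h1 : lam ^ (n - (κ (l:ℕ) - (j:ℕ))) = lam ^ n * lam ^ (j:ℕ) * (lam ^ (κ (l:ℕ)))⁻¹ := by
      rw [eq_mul_inv_iff_mul_eq₀ (pow_ne_zero _ hlam0), ← pow_add, ← pow_add]
      congr 1
      omega
    have h2 : lam ^ (n + (l:ℕ)) = lam ^ n * lam ^ (l:ℕ) := pow_add lam n _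
    have hcl := hCk0 l
    have hlamκ : (lam^(κ (l:ℕ))) ≠ 0 := pow_ne_zero _ hlam0
    have hlamn : lam ^ n ≠ 0 := pow_ne_zero _ hlam0
    have hnj : ((n:ℂ)^(j:ℕ)) ≠ 0 := pow_ne_zero _ hnC0
    have hMj0 := hM0C (j:ℕ)
    calc α l * ((n.choose (κ (l:ℕ) - (j:ℕ)) : ℕ):ℂ) * lam^(n - (κ (l:ℕ) - (j:ℕ)))
        = (lam^(κ (l:ℕ)) * (lam^(κ (l:ℕ)))⁻¹) * (lam^n * (lam^n)⁻¹)
            * (lam^(j:ℕ) * (lam^(l:ℕ))⁻¹ * ((n.choose (κ (l:ℕ) - (l:ℕ)) : ℕ):ℂ)⁻¹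
              * (n:ℂ)^m * ((n:ℂ)^(l:ℕ))⁻¹ * ((M (l:ℕ) : ℕ):ℂ) * w l
              * ((n.choose (κ (l:ℕ) - (j:ℕ)) : ℕ):ℂ)) := by
          rw [hαdef, h1, h2, mul_inv]
          ring
      _ = (lam^(j:ℕ) * (lam^(l:ℕ))⁻¹ * ((n.choose (κ (l:ℕ) - (l:ℕ)) : ℕ):ℂ)⁻¹
              * (n:ℂ)^m * ((n:ℂ)^(l:ℕ))⁻¹ * ((M (l:ℕ) : ℕ):ℂ) * w l
              * ((n.choose (κ (l:ℕ) - (j:ℕ)) : ℕ):ℂ)) := by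
          rw [mul_inv_cancel₀ hlamκ, mul_inv_cancel₀ hlamn, one_mul, one_mul]
      _ = ((n:ℂ)^(j:ℕ) * ((n:ℂ)^(j:ℕ))⁻¹) * (((M (j:ℕ) : ℕ):ℂ) * (((M (j:ℕ) : ℕ):ℂ))⁻¹)
            * (lam^(j:ℕ) * (lam^(l:ℕ))⁻¹ * ((n.choose (κ (l:ℕ) - (l:ℕ)) : ℕ):ℂ)⁻¹
              * (n:ℂ)^m * ((n:ℂ)^(l:ℕ))⁻¹ * ((M (l:ℕ) : ℕ):ℂ) * w l
              * ((n.choose (κ (l:ℕ) - (j:ℕ)) : ℕ):ℂ)) := by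
          rw [mul_inv_cancel₀ hnj, mul_inv_cancel₀ hMj0, one_mul, one_mul]
      _ = A j l * w l * ((((M (j:ℕ)) : ℕ):ℂ) * (n:ℂ)^m * ((n:ℂ)^(j:ℕ))⁻¹) := by
          rw [hAdef]
          ring
  -- the perturbation vector
  obtain ⟨z, hzdef⟩ : ∃ z : X, z = ∑ l ∈ (univ : Finset (Fin q)), α l • Y (κ (l:ℕ)) := ⟨_, rfl⟩
  have hnR1 : (1:ℝ) ≤ (n:ℝ) := by exact_mod_cast hn1
  have hnR0 : (0:ℝ) < (n:ℝ) := by positivity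
  -- bound on the coefficients α
  have hαb : ∀ l : Fin q, ‖α l‖ * (n:ℝ) ≤ CA := by
    intro l
    have hKn : κ (l:ℕ) - (l:ℕ) ≤ n := le_trans (Nat.sub_le _ _) (hκlen _ (hfm l))
    have hCd : (0:ℝ) < ((n.choose (κ (l:ℕ) - (l:ℕ)) : ℕ):ℝ) := by
      exact_mod_cast Nat.choose_pos hKn
    have hdpos : (0:ℝ) < (n:ℝ)^(l:ℕ) * ((n.choose (κ (l:ℕ) - (l:ℕ)) : ℕ):ℝ) := by positivity
    rw [hαnorm, div_mul_eq_mul_div, div_le_iff₀ hdpos]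
    have hcz := caseZ (l:ℕ) (hfm l)
    have hczR : (n:ℝ)^(m+1) ≤ (n:ℝ)^(l:ℕ) * ((n.choose (κ (l:ℕ) - (l:ℕ)) : ℕ):ℝ)
        * ((2:ℝ)^(κ m) * (((κ m).factorial : ℕ):ℝ)) := by
      calc (n:ℝ)^(m+1) = ((n^(m+1) : ℕ):ℝ) := by push_cast; ring
        _ ≤ ((n^(l:ℕ) * n.choose (κ (l:ℕ) - (l:ℕ)) * (2^(κ m) * (κ m).factorial) : ℕ):ℝ) := by
            exact_mod_cast Nat.cast_le.mpr hcz
        _ = _ := by push_cast; ring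
    have hMl : ((M (l:ℕ) : ℕ):ℝ) ≤ ((M m : ℕ):ℝ) := by
      exact_mod_cast Nat.cast_le.mpr (hMmono (hfm l))
    have hMl0 : (0:ℝ) ≤ ((M (l:ℕ) : ℕ):ℝ) := Nat.cast_nonneg _
    calc ((M (l:ℕ) : ℕ):ℝ) * (n:ℝ)^m * ‖w l‖ * (n:ℝ)
        ≤ ((M (l:ℕ) : ℕ):ℝ) * (n:ℝ)^m * (2*Bc) * (n:ℝ) := by
          refine mul_le_mul_of_nonneg_right (mul_le_mul_of_nonneg_left (hwb l) ?_) hnR0.le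
          positivity
      _ = (2*Bc*((M (l:ℕ) : ℕ):ℝ)) * (n:ℝ)^(m+1) := by rw [pow_succ]; ring
      _ ≤ (2*Bc*((M (l:ℕ) : ℕ):ℝ)) * ((n:ℝ)^(l:ℕ) * ((n.choose (κ (l:ℕ) - (l:ℕ)) : ℕ):ℝ)
            * ((2:ℝ)^(κ m) * (((κ m).factorial : ℕ):ℝ))) := by
          refine mul_le_mul_of_nonneg_left hczR (by positivity)
      _ = ((2*Bc*((M (l:ℕ) : ℕ):ℝ)) * ((2:ℝ)^(κ m)*(((κ m).factorial : ℕ):ℝ)))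
            * ((n:ℝ)^(l:ℕ) * ((n.choose (κ (l:ℕ) - (l:ℕ)) : ℕ):ℝ)) := by ring
      _ ≤ CA * ((n:ℝ)^(l:ℕ) * ((n.choose (κ (l:ℕ) - (l:ℕ)) : ℕ):ℝ)) := by
          refine mul_le_mul_of_nonneg_right ?_ hdpos.le
          have h2Bc : (0:ℝ) ≤ 2*Bc := by linarith
          have hstep : (2*Bc*((M (l:ℕ) : ℕ):ℝ)) ≤ (2*Bc*((M m : ℕ):ℝ)) :=
            mul_le_mul_of_nonneg_left hMl h2Bc
          calc (2*Bc*((M (l:ℕ) : ℕ):ℝ)) * ((2:ℝ)^(κ m)*(((κ m).factorial : ℕ):ℝ))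
              ≤ (2*Bc*((M m : ℕ):ℝ)) * ((2:ℝ)^(κ m)*(((κ m).factorial : ℕ):ℝ)) :=
                mul_le_mul_of_nonneg_right hstep (by positivity)
            _ = CA := by rw [hCAdef]; ring
  -- first bound : the size of z
  have hzb : ‖z‖ * (n:ℝ) ≤ CA * SY := by
    have h1 : ‖z‖ ≤ ∑ l ∈ (univ : Finset (Fin q)), ‖α l‖ * ‖Y (κ (l:ℕ))‖ := by
      rw [hzdef]
      refine le_trans (norm_sum_le _ _) (Finset.sum_le_sum fun l _ => ?_)
      rw [norm_smul]
    calc ‖z‖ * (n:ℝ) ≤ (∑ l ∈ (univ : Finset (Fin q)), ‖α l‖ * ‖Y (κ (l:ℕ))‖) * (n:ℝ) :=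
          mul_le_mul_of_nonneg_right h1 hnR0.le
      _ = ∑ l ∈ (univ : Finset (Fin q)), (‖α l‖ * (n:ℝ)) * ‖Y (κ (l:ℕ))‖ := by
          rw [Finset.sum_mul]
          exact Finset.sum_congr rfl fun l _ => by ring
      _ ≤ ∑ l ∈ (univ : Finset (Fin q)), CA * ‖Y (κ (l:ℕ))‖ := by
          refine Finset.sum_le_sum fun l _ => ?_
          exact mul_le_mul_of_nonneg_right (hαb l) (norm_nonneg _)
      _ = CA * SY := by
          rw [hSYdef, ← Finset.mul_sum]
          congr 1
          rw [← Fin.sum_univ_eq_sum_range (fun l => ‖Y (κ l)‖) q]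
  -- the coefficient function of the difference
  obtain ⟨Pc, hPcdef⟩ : ∃ P : ℕ → ℂ, ∀ j, P j =
      (∑ l ∈ (univ : Finset (Fin q)), if j ≤ κ (l:ℕ) then
          α l * ((n.choose (κ (l:ℕ) - j) : ℕ):ℂ) * lam^(n - (κ (l:ℕ) - j)) else 0)
      + (∑ d ∈ range (m+1), if j ≤ d then
          uc d * ((n.choose (d - j) : ℕ):ℂ) * lam^(n - (d - j)) else 0)
      - (if j ≤ m then vc j else 0) := ⟨_, fun _ => rfl⟩
  -- the image formula
  have hTY : ∀ κ' : ℕ, κ' ≤ κ m → ((lam • (1 : X →L[ℂ] X) + S)^n) (Y κ')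
      = ∑ j ∈ range (κ m + 1), (if j ≤ κ' then
          ((n.choose (κ' - j) : ℕ):ℂ) * lam^(n - (κ' - j)) else 0) • Y j := by
    intro κ' hκ'
    have hκ'n : κ' ≤ n := by omega
    rw [T_pow_apply S lam Y hY0 hYs n κ' hκ'n]
    have hrefl := Finset.sum_range_reflect
      (fun i => ((n.choose i : ℕ):ℂ) • lam^(n-i) • Y (κ' - i)) (κ'+1)
    rw [← hrefl]
    have hstep : ∀ j ∈ range (κ'+1),
        ((n.choose (κ'+1-1-j) : ℕ):ℂ) • lam^(n-(κ'+1-1-j)) • Y (κ' - (κ'+1-1-j))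
        = (if j ≤ κ' then ((n.choose (κ' - j) : ℕ):ℂ) * lam^(n - (κ' - j)) else 0) • Y j := by
      intro j hj
      have hjκ : j ≤ κ' := by have := mem_range.mp hj; omega
      rw [show κ'+1-1-j = κ' - j from by omega, show κ' - (κ' - j) = j from by omega,
        if_pos hjκ, smul_smul]
    rw [Finset.sum_congr rfl hstep]
    refine Finset.sum_subset (by rw [range_subset_range]; omega) ?_
    intro j hj hj2
    rw [if_neg (by have h2 : ¬ (j < κ'+1) := fun h => hj2 (mem_range.mpr h); omega), zero_smul]
  -- claim A : the difference formula
  have hdiff : ((lam • (1 : X →L[ℂ] X) + S)^n) ((∑ j ∈ range (m+1), uc j • Y j) + z)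
      - (∑ j ∈ range (m+1), vc j • Y j) = ∑ j ∈ range (κ m + 1), Pc j • Y j := by
    have hκm1 : m + 1 ≤ κ m + 1 := by have := hκge m; omega
    have hTu : ((lam • (1 : X →L[ℂ] X) + S)^n) (∑ j ∈ range (m+1), uc j • Y j)
        = ∑ j ∈ range (κ m + 1), (∑ d ∈ range (m+1), if j ≤ d then
            uc d * ((n.choose (d - j) : ℕ):ℂ) * lam^(n - (d - j)) else 0) • Y j := by
      rw [map_sum]
      have h1 : ∀ d ∈ range (m+1), ((lam • (1 : X →L[ℂ] X) + S)^n) (uc d • Y d)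
          = ∑ j ∈ range (κ m + 1), (if j ≤ d then
              uc d * ((n.choose (d - j) : ℕ):ℂ) * lam^(n - (d - j)) else 0) • Y j := by
        intro d hd
        have hdm : d ≤ κ m := by
          have := mem_range.mp hd; have := hκge m; omega
        rw [map_smul, hTY d hdm, Finset.smul_sum]
        refine Finset.sum_congr rfl fun j _ => ?_
        rw [smul_smul, mul_ite, mul_zero, ← mul_assoc]
      rw [Finset.sum_congr rfl h1, Finset.sum_comm]
      exact Finset.sum_congr rfl fun j _ => (Finset.sum_smul).symm
    have hTz : ((lam • (1 : X →L[ℂ] X) + S)^n) z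
        = ∑ j ∈ range (κ m + 1), (∑ l ∈ (univ : Finset (Fin q)), if j ≤ κ (l:ℕ) then
            α l * ((n.choose (κ (l:ℕ) - j) : ℕ):ℂ) * lam^(n - (κ (l:ℕ) - j)) else 0) • Y j := by
      rw [hzdef, map_sum]
      have h1 : ∀ l : Fin q, ((lam • (1 : X →L[ℂ] X) + S)^n) (α l • Y (κ (l:ℕ)))
          = ∑ j ∈ range (κ m + 1), (if j ≤ κ (l:ℕ) then
              α l * ((n.choose (κ (l:ℕ) - j) : ℕ):ℂ) * lam^(n - (κ (l:ℕ) - j)) else 0) • Y j := by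
        intro l
        rw [map_smul, hTY (κ (l:ℕ)) (hκmono (hfm l)), Finset.smul_sum]
        refine Finset.sum_congr rfl fun j _ => ?_
        rw [smul_smul, mul_ite, mul_zero, ← mul_assoc]
      rw [Finset.sum_congr rfl (fun l _ => h1 l), Finset.sum_comm]
      exact Finset.sum_congr rfl fun j _ => (Finset.sum_smul).symm
    have hv : (∑ j ∈ range (m+1), vc j • Y j)
        = ∑ j ∈ range (κ m + 1), (if j ≤ m then vc j else 0) • Y j := by
      rw [show (∑ j ∈ range (m+1), vc j • Y j)
          = ∑ j ∈ range (m+1), (if j ≤ m then vc j else 0) • Y j from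
        Finset.sum_congr rfl fun j hj => by
          rw [if_pos (by have := mem_range.mp hj; omega)]]
      refine Finset.sum_subset (by rw [range_subset_range]; omega) ?_
      intro j hj hj2
      rw [if_neg (by have h2 : ¬ (j < m+1) := fun h => hj2 (mem_range.mpr h); omega), zero_smul]
    rw [map_add, hTu, hTz, hv, ← Finset.sum_add_distrib, ← Finset.sum_sub_distrib]
    refine Finset.sum_congr rfl fun j _ => ?_
    rw [hPcdef, sub_smul, add_smul]
    abel
  -- claim B : vanishing of the low coefficients
  have hPc0 : ∀ j, j ≤ m → Pc j = 0 := by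
    intro j hj
    have hjq : j < q := by omega
    have heq := hEq ⟨j, hjq⟩
    have hcj := hcdef ⟨j, hjq⟩
    rw [hPcdef]
    have h1 : (∑ l ∈ (univ : Finset (Fin q)), if j ≤ κ (l:ℕ) then
        α l * ((n.choose (κ (l:ℕ) - j) : ℕ):ℂ) * lam^(n - (κ (l:ℕ) - j)) else 0)
        = ∑ l ∈ (univ : Finset (Fin q)),
          α l * ((n.choose (κ (l:ℕ) - j) : ℕ):ℂ) * lam^(n - (κ (l:ℕ) - j)) := by
      refine Finset.sum_congr rfl fun l _ => ?_
      rw [if_pos (le_trans (le_trans hj (by omega)) (hκge (l:ℕ)))]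
    rw [h1]
    rw [heq, hcj, if_pos hj]
    ring
  -- claim C : smallness of the junk coefficients
  have hPcb : ∀ j ∈ range (κ m + 1), ‖Pc j‖ * (n:ℝ) ≤ (q:ℝ) * CJ := by
    intro j hj
    have hCJ0 : (0 : ℝ) ≤ (q:ℝ) * CJ := mul_nonneg (Nat.cast_nonneg _) hCJnn
    by_cases hjm : j ≤ m
    · rw [hPc0 j hjm, norm_zero, zero_mul]
      exact hCJ0
    · push_neg at hjm
      have hterm : ∀ l : Fin q, ‖if j ≤ κ (l:ℕ) then
          α l * ((n.choose (κ (l:ℕ) - j) : ℕ):ℂ) * lam^(n - (κ (l:ℕ) - j)) else 0‖ * (n:ℝ)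
          ≤ CJ := by
        intro l
        by_cases hjκ : j ≤ κ (l:ℕ)
        · rw [if_pos hjκ, norm_mul, norm_mul, norm_pow, hlam, one_pow, mul_one,
            Complex.norm_natCast, hαnorm]
          have hKn : κ (l:ℕ) - (l:ℕ) ≤ n := le_trans (Nat.sub_le _ _) (hκlen _ (hfm l))
          have hCd : (0:ℝ) < ((n.choose (κ (l:ℕ) - (l:ℕ)) : ℕ):ℝ) := by
            exact_mod_cast Nat.choose_pos hKn
          have hdpos : (0:ℝ) < (n:ℝ)^(l:ℕ) * ((n.choose (κ (l:ℕ) - (l:ℕ)) : ℕ):ℝ) := by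
            positivity
          rw [div_mul_eq_mul_div, div_mul_eq_mul_div, div_le_iff₀ hdpos]
          have hcj := caseJ (l:ℕ) j (hfm l) hjm hjκ
          have hcjR : (n:ℝ)^(m+1) * ((n.choose (κ (l:ℕ) - j) : ℕ):ℝ)
              ≤ (n:ℝ)^(l:ℕ) * ((n.choose (κ (l:ℕ) - (l:ℕ)) : ℕ):ℝ)
                * (((2*κ m)^(κ m) : ℕ):ℝ) := by
            calc (n:ℝ)^(m+1) * ((n.choose (κ (l:ℕ) - j) : ℕ):ℝ)
                = ((n^(m+1) *n.choose (κ (l:ℕ) - j) : ℕ):ℝ) := by push_cast; ring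
              _ ≤ _ := by exact_mod_cast Nat.cast_le.mpr hcj
          calc ((M (l:ℕ) : ℕ):ℝ) * (n:ℝ)^m * ‖w l‖ * ((n.choose (κ (l:ℕ) - j) : ℕ):ℝ) * (n:ℝ)
              ≤ ((M (l:ℕ) : ℕ):ℝ) * (n:ℝ)^m * (2*Bc) * ((n.choose (κ (l:ℕ) - j) : ℕ):ℝ) * (n:ℝ) := by
                refine mul_le_mul_of_nonneg_right (mul_le_mul_of_nonneg_right
                  (mul_le_mul_of_nonneg_left (hwb l) (by positivity)) (Nat.cast_nonneg _)) hnR0.le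
            _ = (2*Bc*((M (l:ℕ) : ℕ):ℝ)) * ((n:ℝ)^(m+1) * ((n.choose (κ (l:ℕ) - j) : ℕ):ℝ)) := by
                rw [pow_succ]; ring
            _ ≤ (2*Bc*((M (l:ℕ) : ℕ):ℝ)) * ((n:ℝ)^(l:ℕ) * ((n.choose (κ (l:ℕ) - (l:ℕ)) : ℕ):ℝ)
                  * (((2*κ m)^(κ m) : ℕ):ℝ)) := by
                refine mul_le_mul_of_nonneg_left hcjR (by positivity)
            _ = ((2*Bc*((M (l:ℕ) : ℕ):ℝ)) * (((2*κ m)^(κ m) : ℕ):ℝ))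
                  * ((n:ℝ)^(l:ℕ) * ((n.choose (κ (l:ℕ) - (l:ℕ)) : ℕ):ℝ)) := by ring
            _ ≤ CJ * ((n:ℝ)^(l:ℕ) * ((n.choose (κ (l:ℕ) - (l:ℕ)) : ℕ):ℝ)) := by
                refine mul_le_mul_of_nonneg_right ?_ hdpos.le
                have hMl : ((M (l:ℕ) : ℕ):ℝ) ≤ ((M m : ℕ):ℝ) := by
                  exact_mod_cast Nat.cast_le.mpr (hMmono (hfm l))
                have h2Bc : (0:ℝ) ≤ 2*Bc := by linarith
                calc (2*Bc*((M (l:ℕ) : ℕ):ℝ)) * (((2*κ m)^(κ m) : ℕ):ℝ)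
                    ≤ (2*Bc*((M m : ℕ):ℝ)) * (((2*κ m)^(κ m) : ℕ):ℝ) :=
                      mul_le_mul_of_nonneg_right
                        (mul_le_mul_of_nonneg_left hMl h2Bc) (Nat.cast_nonneg _)
                  _ = CJ := by rw [hCJdef]; push_cast; ring
        · rw [if_neg hjκ, norm_zero, zero_mul]
          exact hCJnn
      calc ‖Pc j‖ * (n:ℝ)
          ≤ (∑ l ∈ (univ : Finset (Fin q)), ‖if j ≤ κ (l:ℕ) then
              α l * ((n.choose (κ (l:ℕ) - j) : ℕ):ℂ) * lam^(n - (κ (l:ℕ) - j)) else 0‖) * (n:ℝ) := by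
            refine mul_le_mul_of_nonneg_right ?_ hnR0.le
            rw [hPcdef]
            have hu0 : (∑ d ∈ range (m+1), if j ≤ d then
                uc d * ((n.choose (d - j) : ℕ):ℂ) * lam^(n - (d - j)) else 0) = 0 := by
              refine Finset.sum_eq_zero fun d hd => ?_
              rw [if_neg (by have := mem_range.mp hd; omega)]
            rw [hu0, if_neg (by omega), add_zero, sub_zero]
            exact norm_sum_le _ _
        _ = ∑ l ∈ (univ : Finset (Fin q)), ‖if j ≤ κ (l:ℕ) then
              α l * ((n.choose (κ (l:ℕ) - j) : ℕ):ℂ) * lam^(n - (κ (l:ℕ) - j)) else 0‖ * (n:ℝ) := by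
            rw [Finset.sum_mul]
        _ ≤ ∑ _l ∈ (univ : Finset (Fin q)), CJ := Finset.sum_le_sum fun l _ => hterm l
        _ = (q:ℝ) * CJ := by
            rw [Finset.sum_const, card_univ, Fintype.card_fin, nsmul_eq_mul]
  -- final assembly
  refine ⟨z, le_trans hzb (by nlinarith [mul_nonneg (mul_nonneg (Nat.cast_nonneg q : (0:ℝ) ≤ (q:ℝ)) hCJnn) hSY2nn]), ?_⟩
  rw [hdiff]
  calc ‖∑ j ∈ range (κ m + 1), Pc j • Y j‖ * (n:ℝ)
      ≤ (∑ j ∈ range (κ m + 1), ‖Pc j‖ * ‖Y j‖) * (n:ℝ) := by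
        refine mul_le_mul_of_nonneg_right ?_ hnR0.le
        refine le_trans (norm_sum_le _ _) (Finset.sum_le_sum fun j _ => ?_)
        rw [norm_smul]
    _ = ∑ j ∈ range (κ m + 1), (‖Pc j‖ * (n:ℝ)) * ‖Y j‖ := by
        rw [Finset.sum_mul]
        exact Finset.sum_congr rfl fun j _ => by ring
    _ ≤ ∑ j ∈ range (κ m + 1), ((q:ℝ) * CJ) * ‖Y j‖ := by
        refine Finset.sum_le_sum fun j hj => ?_
        exact mul_le_mul_of_nonneg_right (hPcb j hj) (norm_nonneg _)
    _ = (q:ℝ) * CJ * SY2 := by rw [hSY2def, ← Finset.mul_sum]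
    _ ≤ CA * SY + (q:ℝ) * CJ * SY2 + 1 := by nlinarith [mul_nonneg hCAnn hSYnn]


lemma main (S : X →L[ℂ] X) (lam : ℂ) (hlam : ‖lam‖ = 1) (Y : ℕ → X)
    (hY0 : S (Y 0) = 0) (hYs : ∀ k, S (Y (k+1)) = Y k)
    (hdenseY : Dense (Submodule.span ℂ (Set.range Y) : Set X)) :
    IsMixingOp (lam • (1 : X →L[ℂ] X) + S) := by
  intro U V hU hV hUne hVne
  obtain ⟨u, huS, huU⟩ := hdenseY.exists_mem_open hU hUne
  obtain ⟨v, hvS, hvV⟩ := hdenseY.exists_mem_open hV hVne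
  obtain ⟨εu, hεu, hball_u⟩ := Metric.isOpen_iff.mp hU u huU
  obtain ⟨εv, hεv, hball_v⟩ := Metric.isOpen_iff.mp hV v hvV
  obtain ⟨cu, hcu⟩ := Finsupp.mem_span_range_iff_exists_finsupp.mp huS
  obtain ⟨cv, hcv⟩ := Finsupp.mem_span_range_iff_exists_finsupp.mp hvS
  set m := cu.support.sup id ⊔ cv.support.sup id with hmdef
  have hu_sum : u = ∑ j ∈ range (m+1), cu j • Y j := by
    rw [← hcu, Finsupp.sum]
    refine Finset.sum_subset ?_ ?_
    · intro a ha
      rw [mem_range]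
      have h1 : a ≤ cu.support.sup id := Finset.le_sup (f := id) ha
      omega
    · intro a _ ha
      rw [Finsupp.notMem_support_iff.mp ha, zero_smul]
  have hv_sum : v = ∑ j ∈ range (m+1), cv j • Y j := by
    rw [← hcv, Finsupp.sum]
    refine Finset.sum_subset ?_ ?_
    · intro a ha
      rw [mem_range]
      have h1 : a ≤ cv.support.sup id := Finset.le_sup (f := id) ha
      omega
    · intro a _ ha
      rw [Finsupp.notMem_support_iff.mp ha, zero_smul]
  obtain ⟨C, hC0, N₀, hN₀, hkey⟩ := key S lam hlam Y hY0 hYs m cu cv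
  set ε := min εu εv with hεdef
  have hε0 : 0 < ε := lt_min hεu hεv
  refine ⟨max N₀ ⌈C / ε⌉₊, ?_⟩
  intro n hn
  have hnN : N₀ ≤ n := le_trans (le_max_left _ _) hn.le
  have hn1 : 1 ≤ n := le_trans hN₀ hnN
  have hnR0 : (0:ℝ) < (n:ℝ) := by positivity
  obtain ⟨z, hz1, hz2⟩ := hkey n hnN
  have hCn : C / n < ε := by
    have h1 : (⌈C / ε⌉₊ : ℝ) < (n:ℝ) := by
      exact_mod_cast Nat.lt_of_le_of_lt (le_max_right N₀ _) hn
    have h2 : C / ε < (n:ℝ) := lt_of_le_of_lt (Nat.le_ceil _) h1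
    rw [div_lt_iff₀ hnR0]
    rw [div_lt_iff₀ hε0] at h2
    linarith
  have hz1' : ‖z‖ < ε := by
    have := (le_div_iff₀ hnR0).mpr hz1
    exact lt_of_le_of_lt this hCn
  have hz2' : ‖((lam • (1 : X →L[ℂ] X) + S)^n) (u + z) - v‖ < ε := by
    rw [hu_sum, hv_sum]
    have := (le_div_iff₀ hnR0).mpr hz2
    exact lt_of_le_of_lt this hCn
  refine ⟨((lam • (1 : X →L[ℂ] X) + S)^n) (u + z), ⟨⟨u + z, ?_, rfl⟩, ?_⟩⟩
  · refine hball_u ?_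
    rw [Metric.mem_ball, dist_eq_norm]
    have h1 : u + z - u = z := by abel
    rw [h1]
    exact lt_of_lt_of_le hz1' (min_le_left _ _)
  · refine hball_v ?_
    rw [Metric.mem_ball, dist_eq_norm]
    exact lt_of_lt_of_le hz2' (min_le_right _ _)


end Stmt5Aux

theorem stmt5 {X : Type*} [NormedAddCommGroup X] [NormedSpace ℂ X] [CompleteSpace X]
    [TopologicalSpace.SeparableSpace X] (hinf : ¬ FiniteDimensional ℂ X)
    (S : X →L[ℂ] X) (x : ℕ → X) (hli : LinearIndependent ℂ x)
    (hdense : Dense (Submodule.span ℂ (Set.range x) : Set X))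
    (hshift : IsGenBackwardOneShift S x)
    (lam : ℂ) (hlam : ‖lam‖ = 1) :
    IsMixingOp (lam • (1 : X →L[ℂ] X) + S) := by
  obtain ⟨Y, hY0, hYs, hspan⟩ := Stmt5Aux.exists_chain S x hli hshift
  have hdenseY : Dense (Submodule.span ℂ (Set.range Y) : Set X) :=
    Dense.mono (SetLike.coe_subset_coe.mpr hspan) hdense
  exact Stmt5Aux.main S lam hlam Y hY0 hYs hdenseY
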